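/- arXiv:1703.06524 — 4 statements merged into one kernel-verified Lean document; each statement's English description precedes it below -/
import Mathlib

section
/- Let Π > 1 be an integer. Then the sum over the prime divisors p of Π of (log p)/p satisfies Σ_{p | Π} (log p)/p ≤ log log Π + 2. -/
open scoped BigOperators
open Finset Nat

private lemma cast_div_le_succ (a b : ℕ) (hb : 0 < b) : (a : ℝ) / b ≤ (a / b : ℕ) + 1 := by
  rw [div_le_iff₀ (by positivity)]
  have h : (a : ℝ) < (a / b : ℕ) * b + b := by exact_mod_cast Nat.lt_div_mul_add hb
  nlinarith

private lemma div_le_fact_factorization {m p : ℕ} (hp : p.Prime) (hpm : p ≤ m) :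
    m / p ≤ (m !).factorization p := by
  rw [← hp.pow_dvd_iff_le_factorization m.factorial_ne_zero,
    hp.pow_dvd_factorial_iff (Nat.lt_succ_self _)]
  calc m / p = m / p ^ 1 := by rw [pow_one]
    _ ≤ ∑ i ∈ Finset.Ico 1 (Nat.log p m + 1), m / p ^ i := by
        apply Finset.single_le_sum (f := fun i => m / p ^ i) (fun i _ => Nat.zero_le _)
        simp only [Finset.mem_Ico, Nat.lt_succ_iff]
        exact ⟨le_refl 1, Nat.log_pos hp.one_lt hpm⟩

private lemma sum_div_mul_log_le (m : ℕ) :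
    ∑ p ∈ (m + 1).primesBelow, ((m / p : ℕ) : ℝ) * Real.log p ≤ Real.log (m !) := by
  rw [Real.log_nat_eq_sum_factorization, Finsupp.sum, Nat.support_factorization]
  calc ∑ p ∈ (m + 1).primesBelow, ((m / p : ℕ) : ℝ) * Real.log p
      ≤ ∑ p ∈ (m + 1).primesBelow, ((m !).factorization p : ℝ) * Real.log p := by
        apply Finset.sum_le_sum
        intro p hp
        have hp' := Nat.prime_of_mem_primesBelow hp
        have hpm : p ≤ m := Nat.lt_succ_iff.mp (Nat.lt_of_mem_primesBelow hp)
        have h1 : ((m / p : ℕ) : ℝ) ≤ ((m !).factorization p : ℝ) := by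
          exact_mod_cast div_le_fact_factorization hp' hpm
        exact mul_le_mul_of_nonneg_right h1 (Real.log_natCast_nonneg p)
    _ ≤ ∑ p ∈ (m !).primeFactors, ((m !).factorization p : ℝ) * Real.log p := by
        apply Finset.sum_le_sum_of_subset_of_nonneg
        · intro p hp
          have hp' := Nat.prime_of_mem_primesBelow hp
          have hpm : p ≤ m := Nat.lt_succ_iff.mp (Nat.lt_of_mem_primesBelow hp)
          exact Nat.mem_primeFactors.mpr
            ⟨hp', hp'.dvd_factorial.mpr hpm, m.factorial_ne_zero⟩
        · intro p _ _
          exact mul_nonneg (Nat.cast_nonneg _) (Real.log_natCast_nonneg p)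

private lemma theta_le (m : ℕ) :
    ∑ p ∈ (m + 1).primesBelow, Real.log p ≤ m * Real.log 4 := by
  have h0 : ((primorial m : ℕ) : ℝ) = ∏ p ∈ (m + 1).primesBelow, (p : ℝ) := by
    rw [primorial, Nat.cast_prod]; rfl
  have h1 : Real.log (primorial m) ≤ m * Real.log 4 := by
    calc Real.log (primorial m) ≤ Real.log ((4 : ℝ) ^ m) := by
          apply Real.log_le_log (by exact_mod_cast (primorial_pos m))
          exact_mod_cast primorial_le_4_pow m
      _ = m * Real.log 4 := by rw [Real.log_pow]
  rwa [h0, Real.log_prod (fun p hp => by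
    exact Nat.cast_ne_zero.mpr (Nat.prime_of_mem_primesBelow hp).pos.ne')] at h1

private lemma log_factorial_le : ∀ m : ℕ, 1 ≤ m →
    Real.log (m !) ≤ (m + 1) * Real.log m + 1 - m := by
  intro m hm
  induction m, hm using Nat.le_induction with
  | base => simp
  | succ m hm ih =>
    have hm0 : (0 : ℝ) < m := by exact_mod_cast hm
    have hlog : 1 ≤ (Real.log (m + 1) - Real.log m) * ((m : ℝ) + 1) := by
      rw [← div_le_iff₀ (by positivity)]
      have h := Real.log_le_sub_one_of_pos (x := (m : ℝ) / (m + 1)) (by positivity)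
      rw [Real.log_div hm0.ne' (by positivity)] at h
      have h2 : (m : ℝ) / (m + 1) - 1 = -(1 / (m + 1)) := by field_simp; ring
      rw [h2] at h
      linarith
    have hfac : ((m + 1)! : ℝ) = ((m : ℝ) + 1) * (m ! : ℝ) := by
      rw [Nat.factorial_succ]; push_cast; ring
    rw [hfac, Real.log_mul (by positivity) (by exact_mod_cast m.factorial_ne_zero)]
    have key : ((m : ℝ) + 1) * Real.log m + 1 ≤ ((m : ℝ) + 1) * Real.log (m + 1) := by
      nlinarith [hlog]
    push_cast
    nlinarith [ih]

private lemma mertens_bound : ∀ m : ℕ, 2 ≤ m →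
    ∑ p ∈ (m + 1).primesBelow, Real.log p / p ≤ Real.log m + 1 := by
  intro m hm
  rcases Nat.lt_or_ge m 5 with h5 | h5
  · interval_cases m
    · have h : Nat.primesBelow 3 = {2} := by decide
      rw [h]
      simp only [Finset.sum_singleton]
      push_cast
      have := Real.log_nonneg (by norm_num : (1:ℝ) ≤ 2)
      linarith
    · have h : Nat.primesBelow 4 = {2, 3} := by decide
      rw [h]
      rw [Finset.sum_insert (by decide), Finset.sum_singleton]
      have h2 : Real.log 2 ≤ Real.log 3 := Real.log_le_log (by norm_num) (by norm_num)
      have h3 := Real.log_natCast_nonneg 3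
      push_cast at *
      linarith
    · have h : Nat.primesBelow 5 = {2, 3} := by decide
      rw [h]
      rw [Finset.sum_insert (by decide), Finset.sum_singleton]
      have h2 : Real.log 2 ≤ Real.log 4 := Real.log_le_log (by norm_num) (by norm_num)
      have h3 : Real.log 3 ≤ Real.log 4 := Real.log_le_log (by norm_num) (by norm_num)
      have h4 : (0:ℝ) ≤ Real.log 4 := Real.log_nonneg (by norm_num)
      push_cast at *
      linarith
  · -- main case m ≥ 5
    have hm0 : (0 : ℝ) < m := by exact_mod_cast Nat.lt_of_lt_of_le (by norm_num) h5
    have key : (m : ℝ) * ∑ p ∈ (m + 1).primesBelow, Real.log p / p ≤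
        Real.log (m !) + m * Real.log 4 := by
      rw [Finset.mul_sum]
      calc ∑ p ∈ (m + 1).primesBelow, (m : ℝ) * (Real.log p / p)
          ≤ ∑ p ∈ (m + 1).primesBelow, (((m / p : ℕ) : ℝ) * Real.log p + Real.log p) := by
            apply Finset.sum_le_sum
            intro p hp
            have hp' := Nat.prime_of_mem_primesBelow hp
            have hp0 : (0 : ℝ) < p := by exact_mod_cast hp'.pos
            have h1 : (m : ℝ) * (Real.log p / p) = (m : ℝ) / p * Real.log p := by ring
            rw [h1]
            have h2 : (m : ℝ) / p ≤ ((m / p : ℕ) : ℝ) + 1 := cast_div_le_succ m p hp'.pos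
            nlinarith [Real.log_natCast_nonneg p]
        _ = (∑ p ∈ (m + 1).primesBelow, ((m / p : ℕ) : ℝ) * Real.log p) +
            ∑ p ∈ (m + 1).primesBelow, Real.log p := Finset.sum_add_distrib
        _ ≤ Real.log (m !) + m * Real.log 4 :=
            add_le_add (sum_div_mul_log_le m) (theta_le m)
    have hlogfac := log_factorial_le m (by omega)
    have hlogm : Real.log m ≤ (m : ℝ) / Real.exp 1 := by
      have h := Real.log_le_sub_one_of_pos (x := (m : ℝ) / Real.exp 1) (by positivity)
      rw [Real.log_div hm0.ne' (Real.exp_pos 1).ne', Real.log_exp] at h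
      linarith
    have hexp : (2.7182818283 : ℝ) < Real.exp 1 := Real.exp_one_gt_d9
    have hlogm' : Real.log m * 2.7182818283 ≤ (m : ℝ) := by
      have h0 : (0 : ℝ) ≤ Real.log m := Real.log_natCast_nonneg m
      have h : Real.log m * Real.exp 1 ≤ (m : ℝ) := by
        rw [← le_div_iff₀ (Real.exp_pos 1)]; exact hlogm
      nlinarith [hexp]
    have hlog4 : Real.log 4 ≤ 1.3862943616 := by
      have h4 : (4 : ℝ) = 2 ^ 2 := by norm_num
      rw [h4, Real.log_pow]
      have := Real.log_two_lt_d9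
      push_cast
      linarith
    have hm5 : (5 : ℝ) ≤ m := by exact_mod_cast h5
    have h1 : (m : ℝ) * Real.log 4 ≤ (m : ℝ) * 1.3862943616 :=
      mul_le_mul_of_nonneg_left hlog4 hm0.le
    have final : (m : ℝ) * ∑ p ∈ (m + 1).primesBelow, Real.log p / p ≤
        (m : ℝ) * (Real.log m + 1) := by
      nlinarith [key, hlogfac, hlogm', hm5, h1]
    exact le_of_mul_le_mul_left final hm0

/-- For every integer `Π > 1`,
`∑_{p | Π} (log p)/p ≤ log log Π + 2`, the sum being over the prime divisors of `Π`. -/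
theorem statement3 (n : ℕ) (hn : 1 < n) :
    ∑ p ∈ n.primeFactors, Real.log p / p ≤ Real.log (Real.log n) + 2 := by
  classical
  have hL2 : Real.log 2 ≤ Real.log n := Real.log_le_log (by norm_num) (by exact_mod_cast hn)
  have hLpos : 0 < Real.log n := lt_of_lt_of_le (Real.log_pos (by norm_num)) hL2
  set L := Real.log n with hLdef
  have hsumlog : ∑ p ∈ n.primeFactors, Real.log p ≤ L := by
    have hd : (∏ p ∈ n.primeFactors, p) ∣ n := Nat.prod_primeFactors_dvd n
    have hle : (∏ p ∈ n.primeFactors, p) ≤ n := Nat.le_of_dvd (by omega) hd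
    have hpos : 0 < ∏ p ∈ n.primeFactors, p :=
      Finset.prod_pos fun p hp => (Nat.prime_of_mem_primeFactors hp).pos
    have h2 : Real.log ((∏ p ∈ n.primeFactors, p : ℕ) : ℝ) ≤ L :=
      Real.log_le_log (by exact_mod_cast hpos) (by exact_mod_cast hle)
    rwa [Nat.cast_prod, Real.log_prod (fun p hp =>
      Nat.cast_ne_zero.mpr (Nat.prime_of_mem_primeFactors hp).pos.ne')] at h2
  have htail : ∑ p ∈ n.primeFactors.filter (fun p : ℕ => ¬ (p : ℝ) ≤ L), Real.log p / p ≤ 1 := by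
    have hnum : ∑ p ∈ n.primeFactors.filter (fun p : ℕ => ¬ (p : ℝ) ≤ L), Real.log p ≤ L :=
      le_trans (Finset.sum_le_sum_of_subset_of_nonneg (Finset.filter_subset _ _)
        (fun p _ _ => Real.log_natCast_nonneg p)) hsumlog
    calc ∑ p ∈ n.primeFactors.filter (fun p : ℕ => ¬ (p : ℝ) ≤ L), Real.log p / p
        ≤ ∑ p ∈ n.primeFactors.filter (fun p : ℕ => ¬ (p : ℝ) ≤ L), Real.log p / L := by
          apply Finset.sum_le_sum
          intro p hp
          rcases Finset.mem_filter.mp hp with ⟨_, hp2⟩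
          exact div_le_div_of_nonneg_left (Real.log_natCast_nonneg p) hLpos
            (le_of_lt (not_le.mp hp2))
      _ = (∑ p ∈ n.primeFactors.filter (fun p : ℕ => ¬ (p : ℝ) ≤ L), Real.log p) / L :=
          (Finset.sum_div _ _ _).symm
      _ ≤ L / L := by gcongr
      _ = 1 := div_self hLpos.ne'
  have hhead : ∑ p ∈ n.primeFactors.filter (fun p : ℕ => (p : ℝ) ≤ L), Real.log p / p ≤
      Real.log L + 1 := by
    have hsub : n.primeFactors.filter (fun p : ℕ => (p : ℝ) ≤ L) ⊆ (⌊L⌋₊ + 1).primesBelow := by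
      intro p hp
      rcases Finset.mem_filter.mp hp with ⟨hp1, hp2⟩
      exact Nat.mem_primesBelow.mpr ⟨Nat.lt_succ_of_le (Nat.le_floor hp2),
        Nat.prime_of_mem_primeFactors hp1⟩
    have h1 : ∑ p ∈ n.primeFactors.filter (fun p : ℕ => (p : ℝ) ≤ L), Real.log p / p ≤
        ∑ p ∈ (⌊L⌋₊ + 1).primesBelow, Real.log p / p :=
      Finset.sum_le_sum_of_subset_of_nonneg hsub (fun p _ _ =>
        div_nonneg (Real.log_natCast_nonneg p) (Nat.cast_nonneg p))
    rcases Nat.lt_or_ge ⌊L⌋₊ 2 with hk2 | hk2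
    · have hempty : (⌊L⌋₊ + 1).primesBelow = ∅ := by
        interval_cases h : ⌊L⌋₊ <;> decide
      rw [hempty, Finset.sum_empty] at h1
      have hL1 : -1 ≤ Real.log L := by
        rw [Real.le_log_iff_exp_le hLpos, Real.exp_neg]
        have h27 : (2.7182818283 : ℝ) < Real.exp 1 := Real.exp_one_gt_d9
        have h2 : (Real.exp 1)⁻¹ ≤ (2.7182818283 : ℝ)⁻¹ :=
          inv_anti₀ (by norm_num) h27.le
        have h3 := Real.log_two_gt_d9
        have h4 : (2.7182818283 : ℝ)⁻¹ ≤ 0.6 := by norm_num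
        linarith
      linarith
    · have hkpos : (0 : ℝ) < (⌊L⌋₊ : ℕ) := by
        exact_mod_cast Nat.lt_of_lt_of_le (by norm_num) hk2
      have h2 := mertens_bound ⌊L⌋₊ hk2
      have h3 : Real.log (⌊L⌋₊ : ℕ) ≤ Real.log L :=
        Real.log_le_log hkpos (Nat.floor_le hLpos.le)
      linarith
  calc ∑ p ∈ n.primeFactors, Real.log p / p
      = (∑ p ∈ n.primeFactors.filter (fun p : ℕ => (p : ℝ) ≤ L), Real.log p / p) +
        ∑ p ∈ n.primeFactors.filter (fun p : ℕ => ¬ (p : ℝ) ≤ L), Real.log p / p :=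
        (Finset.sum_filter_add_sum_filter_not _ _ _).symm
    _ ≤ (Real.log L + 1) + 1 := add_le_add hhead htail
    _ = Real.log L + 2 := by ring
end

section
/- Let a = (a₀,a₁,a₂,a₃) and b = (b₀,b₁,b₂,b₃) be quadruples of integers such that a_i b_j − a_j b_i ≠ 0 for some indices i, j. Then there exist quadruples of integers c = (c₀,c₁,c₂,c₃) and d = (d₀,d₁,d₂,d₃) such that gcd over all pairs i ≠ j of (c_i d_j − c_j d_i) equals 1, and such that c and d span the same 2-dimensional ℚ-vector subspace of ℚ⁴ as a and b. -/
open scoped BigOperators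

private lemma span_pair_smul_add {V : Type*} [AddCommGroup V] [Module ℚ V]
    (x y : V) (c d : ℚ) (hd : d ≠ 0) :
    Submodule.span ℚ ({x, c • x + d • y} : Set V) = Submodule.span ℚ ({x, y} : Set V) := by
  apply le_antisymm <;> rw [Submodule.span_le] <;> intro z hz <;>
    rcases hz with rfl | rfl <;> rw [SetLike.mem_coe, Submodule.mem_span_pair]
  · exact ⟨1, 0, by simp⟩
  · exact ⟨c, d, rfl⟩
  · exact ⟨1, 0, by simp⟩
  · refine ⟨-(d⁻¹ * c), d⁻¹, ?_⟩
    rw [smul_add, smul_smul, smul_smul, ← add_assoc, ← add_smul, inv_mul_cancel₀ hd]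
    rw [show -(d⁻¹ * c) + d⁻¹ * c = 0 by ring, zero_smul, zero_add, one_smul]

private abbrev Smm : Finset (Fin 4 × Fin 4) := Finset.univ.filter fun p : Fin 4 × Fin 4 => p.1 ≠ p.2

private def Gm (a b : Fin 4 → ℤ) : ℤ := Smm.gcd fun p => a p.1 * b p.2 - a p.2 * b p.1

private lemma Gm_nonneg (a b : Fin 4 → ℤ) : 0 ≤ Gm a b := by
  have h2 : |Gm a b| = Gm a b := by
    rw [Int.abs_eq_normalize]; exact Finset.normalize_gcd
  exact h2 ▸ abs_nonneg (Gm a b)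

private lemma Gm_ne_zero {a b : Fin 4 → ℤ} (h : ∃ i j : Fin 4, a i * b j - a j * b i ≠ 0) :
    Gm a b ≠ 0 := by
  obtain ⟨i, j, hij⟩ := h
  intro hg
  rw [Gm, Finset.gcd_eq_zero_iff] at hg
  have hijne : i ≠ j := by rintro rfl; simp at hij
  exact hij (hg (i, j) (by simp [Smm, hijne]))

private lemma Gm_dvd {a b : Fin 4 → ℤ} {i j : Fin 4} (hij : i ≠ j) :
    Gm a b ∣ a i * b j - a j * b i :=
  Finset.gcd_dvd (show (i, j) ∈ Smm by simp [Smm, hij])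

private lemma key : ∀ n : ℕ, ∀ a b : Fin 4 → ℤ, (Gm a b).natAbs ≤ n →
    (∃ i j : Fin 4, a i * b j - a j * b i ≠ 0) →
    ∃ c d : Fin 4 → ℤ, Gm c d = 1 ∧
      Submodule.span ℚ ({fun i => (c i : ℚ), fun i => (d i : ℚ)} : Set (Fin 4 → ℚ)) =
        Submodule.span ℚ ({fun i => (a i : ℚ), fun i => (b i : ℚ)} : Set (Fin 4 → ℚ)) := by
  intro n
  induction n with
  | zero =>
    intro a b hle h
    exact absurd (Int.natAbs_eq_zero.mp (Nat.le_zero.mp hle)) (Gm_ne_zero h)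
  | succ n ih =>
    intro a b hle h
    set g := Gm a b with hgdef
    have hg0 : g ≠ 0 := Gm_ne_zero h
    by_cases hg1 : g = 1
    · exact ⟨a, b, hg1, rfl⟩
    -- g ≥ 2, take a prime factor p
    have hgnn : 0 ≤ g := Gm_nonneg a b
    have hna : 2 ≤ g.natAbs := by
      rcases Nat.lt_or_ge g.natAbs 2 with h2 | h2
      · interval_cases hh : g.natAbs
        · exact absurd (Int.natAbs_eq_zero.mp hh) hg0
        · have := Int.natAbs_eq g
          rcases this with h' | h' <;> rw [hh] at h' <;> omega
      · exact h2
    set p := g.natAbs.minFac with hpdef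
    have hpp : p.Prime := Nat.minFac_prime (by omega)
    have hpg : (p : ℤ) ∣ g := by
      have := Nat.minFac_dvd g.natAbs
      exact Int.natAbs_dvd.mp (Int.natCast_dvd_natCast.mpr this)
    have hp2 : 2 ≤ p := hpp.two_le
    have hpdvd : ∀ i j : Fin 4, (p : ℤ) ∣ a i * b j - a j * b i := by
      intro i j
      rcases eq_or_ne i j with rfl | hij
      · simp
      · exact hpg.trans (Gm_dvd hij)
    have hp0 : (p : ℤ) ≠ 0 := by positivity
    -- the common construction: given y, and hypothesis p ∣ a i + y * b i for all i,
    -- replace a by a' = (a + y•b)/p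
    have main : ∀ y : ℤ, (∀ i, (p : ℤ) ∣ a i + y * b i) →
        ∃ c d : Fin 4 → ℤ, Gm c d = 1 ∧
          Submodule.span ℚ ({fun i => (c i : ℚ), fun i => (d i : ℚ)} : Set (Fin 4 → ℚ)) =
            Submodule.span ℚ ({fun i => (a i : ℚ), fun i => (b i : ℚ)} : Set (Fin 4 → ℚ)) := by
      intro y hy
      set a' : Fin 4 → ℤ := fun i => (a i + y * b i) / p with ha'def
      have ha' : ∀ i, (p : ℤ) * a' i = a i + y * b i := by
        intro i; exact Int.mul_ediv_cancel' (hy i)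
      have hminor : ∀ i j : Fin 4, a i * b j - a j * b i = (p : ℤ) * (a' i * b j - a' j * b i) := by
        intro i j
        have h1 := ha' i
        have h2 := ha' j
        linear_combination b i * h2 - b j * h1
      have hGm' : g = (p : ℤ) * Gm a' b := by
        rw [hgdef, Gm, Gm, Finset.gcd_congr rfl (fun q _ => hminor q.1 q.2),
          Finset.gcd_mul_left, Int.normalize_coe_nat]
      have hne' : ∃ i j : Fin 4, a' i * b j - a' j * b i ≠ 0 := by
        obtain ⟨i, j, hij⟩ := h
        refine ⟨i, j, fun hc => hij ?_⟩
        rw [hminor i j, hc, mul_zero]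
      have hG'0 : Gm a' b ≠ 0 := Gm_ne_zero hne'
      have hle' : (Gm a' b).natAbs ≤ n := by
        have : g.natAbs = p * (Gm a' b).natAbs := by
          rw [hGm', Int.natAbs_mul, Int.natAbs_natCast]
        have h1 : 1 ≤ (Gm a' b).natAbs := Nat.one_le_iff_ne_zero.mpr (Int.natAbs_ne_zero.mpr hG'0)
        nlinarith [this, h1, hp2, hle]
      obtain ⟨c, d, hcd1, hcd2⟩ := ih a' b hle' hne'
      refine ⟨c, d, hcd1, hcd2.trans ?_⟩
      -- span {A', B} = span {A, B}
      have hcast : (fun i => ((a' i : ℚ))) =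
          ((y : ℚ) / p) • (fun i => (b i : ℚ)) + ((p : ℚ))⁻¹ • (fun i => (a i : ℚ)) := by
        funext i
        have := ha' i
        have hq : (p : ℚ) * (a' i : ℚ) = (a i : ℚ) + (y : ℚ) * (b i : ℚ) := by
          exact_mod_cast congrArg (fun z : ℤ => (z : ℚ)) this
        have hpq : (p : ℚ) ≠ 0 := by positivity
        simp only [Pi.add_apply, Pi.smul_apply, smul_eq_mul]
        field_simp
        linarith [hq]
      rw [Set.pair_comm (fun i => ((a' i : ℚ))) (fun i => ((b i : ℚ))),
        Set.pair_comm (fun i => ((a i : ℚ))) (fun i => ((b i : ℚ))), hcast]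
      exact span_pair_smul_add _ _ _ _ (by
        have hpq : (p : ℚ) ≠ 0 := by positivity
        exact inv_ne_zero hpq)
    by_cases hb : ∀ i, (p : ℤ) ∣ b i
    · -- divide b by p
      set b' : Fin 4 → ℤ := fun i => b i / p with hb'def
      have hb' : ∀ i, (p : ℤ) * b' i = b i := fun i => Int.mul_ediv_cancel' (hb i)
      have hminor : ∀ i j : Fin 4, a i * b j - a j * b i = (p : ℤ) * (a i * b' j - a j * b' i) := by
        intro i j
        have h1 := hb' i
        have h2 := hb' j
        linear_combination a j * h1 - a i * h2
      have hGm' : g = (p : ℤ) * Gm a b' := by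
        rw [hgdef, Gm, Gm, Finset.gcd_congr rfl (fun q _ => hminor q.1 q.2),
          Finset.gcd_mul_left, Int.normalize_coe_nat]
      have hne' : ∃ i j : Fin 4, a i * b' j - a j * b' i ≠ 0 := by
        obtain ⟨i, j, hij⟩ := h
        refine ⟨i, j, fun hc => hij ?_⟩
        rw [hminor i j, hc, mul_zero]
      have hG'0 : Gm a b' ≠ 0 := Gm_ne_zero hne'
      have hle' : (Gm a b').natAbs ≤ n := by
        have : g.natAbs = p * (Gm a b').natAbs := by
          rw [hGm', Int.natAbs_mul, Int.natAbs_natCast]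
        have h1 : 1 ≤ (Gm a b').natAbs := Nat.one_le_iff_ne_zero.mpr (Int.natAbs_ne_zero.mpr hG'0)
        nlinarith [this, h1, hp2, hle]
      obtain ⟨c, d, hcd1, hcd2⟩ := ih a b' hle' hne'
      refine ⟨c, d, hcd1, hcd2.trans ?_⟩
      have hcast : (fun i => ((b' i : ℚ))) =
          (0 : ℚ) • (fun i => (a i : ℚ)) + ((p : ℚ))⁻¹ • (fun i => (b i : ℚ)) := by
        funext i
        have := hb' i
        have hq : (p : ℚ) * (b' i : ℚ) = (b i : ℚ) := by
          exact_mod_cast congrArg (fun z : ℤ => (z : ℚ)) this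
        have hpq : (p : ℚ) ≠ 0 := by positivity
        simp only [Pi.add_apply, Pi.smul_apply, smul_eq_mul]
        field_simp
        linarith [hq]
      rw [hcast]
      exact span_pair_smul_add _ _ _ _ (by
        have hpq : (p : ℚ) ≠ 0 := by positivity
        exact inv_ne_zero hpq)
    · -- exists k with p ∤ b k : find y with p ∣ a i + y * b i for all i
      push_neg at hb
      obtain ⟨k, hk⟩ := hb
      haveI : Fact p.Prime := ⟨hpp⟩
      have hbk : ((b k : ℤ) : ZMod p) ≠ 0 := by
        rw [Ne, ZMod.intCast_zmod_eq_zero_iff_dvd]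
        exact_mod_cast hk
      set yz : ZMod p := (-(a k : ℤ) : ZMod p) * ((b k : ℤ) : ZMod p)⁻¹ with hyz
      refine main (yz.val : ℤ) ?_
      intro i
      rw [← ZMod.intCast_zmod_eq_zero_iff_dvd]
      push_cast
      have hyzc : ((yz.val : ℕ) : ZMod p) = yz := by
        rw [ZMod.natCast_val, ZMod.cast_id]
      rw [hyzc, hyz]
      have hmik : (((a i * b k - a k * b i : ℤ)) : ZMod p) = 0 := by
        rw [ZMod.intCast_zmod_eq_zero_iff_dvd]
        exact hpdvd i k
      push_cast at hmik
      field_simp [hbk]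
      linear_combination hmik
  
/-- Given integer quadruples `a, b` with `a_i b_j - a_j b_i ≠ 0` for some
`i, j`, there are integer quadruples `c, d` with `gcd_{i ≠ j}(c_i d_j - c_j d_i) = 1`
spanning the same 2-dimensional `ℚ`-subspace of `ℚ⁴` as `a` and `b`. -/
theorem statement4 (a b : Fin 4 → ℤ)
    (h : ∃ i j : Fin 4, a i * b j - a j * b i ≠ 0) :
    ∃ c d : Fin 4 → ℤ,
      ((Finset.univ.filter fun p : Fin 4 × Fin 4 => p.1 ≠ p.2).gcd
          fun p => c p.1 * d p.2 - c p.2 * d p.1) = 1 ∧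
      Submodule.span ℚ ({fun i => (c i : ℚ), fun i => (d i : ℚ)} : Set (Fin 4 → ℚ)) =
        Submodule.span ℚ ({fun i => (a i : ℚ), fun i => (b i : ℚ)} : Set (Fin 4 → ℚ)) := by
  exact key (Gm a b).natAbs a b le_rfl h
end

section
/- Let q(x₀,x₁,x₂,x₃) = a₀x₀² + a₁x₁² + a₂x₂² + a₃x₃² and r(x₀,x₁,x₂,x₃) = b₀x₀² + b₁x₁² + b₂x₂² + b₃x₃² be a primitive pair of diagonal quadratic forms with integer coefficients. Let x = (x₀,x₁,x₂,x₃) and y = (y₀,y₁,y₂,y₃) in ℤ⁴ satisfy q(x) = r(x) = 0 and q(y) = r(y) = 0. Then there exists a nonnegative integer λ such that |x_k² y_l² − x_l² y_k²| = λ·|a_i b_j − a_j b_i| for every choice of indices i, j, k, l with {i,j,k,l} = {0,1,2,3}. -/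
open scoped BigOperators

/-- `d_{ij} = a_i b_j - a_j b_i`. -/
def dd (a b : Fin 4 → ℤ) (i j : Fin 4) : ℤ := a i * b j - a j * b i

/-- A pair of diagonal quadratic forms with integer coefficient vectors `a`, `b` is
primitive if the gcd of the `a_i b_j - a_j b_i` over all pairs `i ≠ j` is `1`. -/
def PrimPair (a b : Fin 4 → ℤ) : Prop :=
  ((Finset.univ.filter fun p : Fin 4 × Fin 4 => p.1 ≠ p.2).gcd
    fun p => dd a b p.1 p.2) = 1

/-- The six `d`-invariants indexed by the unordered pairs in `Fin 4`. -/
def dd6 (a b : Fin 4 → ℤ) : Fin 6 → ℤ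
  | 0 => a 0 * b 1 - a 1 * b 0
  | 1 => a 0 * b 2 - a 2 * b 0
  | 2 => a 0 * b 3 - a 3 * b 0
  | 3 => a 1 * b 2 - a 2 * b 1
  | 4 => a 1 * b 3 - a 3 * b 1
  | 5 => a 2 * b 3 - a 3 * b 2

/-- The six signed Plücker coordinates of the pair of zeros. -/
def pp6 (x y : Fin 4 → ℤ) : Fin 6 → ℤ
  | 0 => x 2 ^ 2 * y 3 ^ 2 - x 3 ^ 2 * y 2 ^ 2
  | 1 => x 3 ^ 2 * y 1 ^ 2 - x 1 ^ 2 * y 3 ^ 2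
  | 2 => x 1 ^ 2 * y 2 ^ 2 - x 2 ^ 2 * y 1 ^ 2
  | 3 => x 0 ^ 2 * y 3 ^ 2 - x 3 ^ 2 * y 0 ^ 2
  | 4 => x 2 ^ 2 * y 0 ^ 2 - x 0 ^ 2 * y 2 ^ 2
  | 5 => x 0 ^ 2 * y 1 ^ 2 - x 1 ^ 2 * y 0 ^ 2

lemma exists_ratio (D P : Fin 6 → ℤ)
    (hsym : ∀ p q, D p * P q = D q * P p)
    (hne : ∃ p, D p ≠ 0)
    (hco : ∀ e w : ℤ, (∀ q, e ∣ D q * w) → e ∣ w) :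
    ∃ c : ℤ, ∀ p, P p = c * D p := by
  obtain ⟨p0, h0⟩ := hne
  have hd : D p0 ∣ P p0 := hco (D p0) (P p0) (fun q => ⟨P q, hsym q p0⟩)
  obtain ⟨c, hcp⟩ := hd
  refine ⟨c, fun p => ?_⟩
  have h2 : D p0 * P p = D p0 * (c * D p) := by
    rw [hsym p0 p, hcp]; ring
  exact mul_left_cancel₀ h0 h2

lemma abs_helper5 (c u v U V : ℤ) (h : u = c * v) (hU : |U| = |u|) (hV : |V| = |v|) :
    |U| = (c.natAbs : ℤ) * |V| := by
  rw [hU, hV, h, abs_mul, Int.abs_eq_natAbs]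

set_option maxHeartbeats 4000000 in
/-- For a primitive pair of diagonal quadratic forms `q, r` and common
integral zeros `x, y`, there is a nonnegative integer `λ` with
`|x_k² y_l² - x_l² y_k²| = λ |a_i b_j - a_j b_i|` whenever `{i,j,k,l} = {0,1,2,3}`. -/
theorem statement5 (a b x y : Fin 4 → ℤ) (hprim : PrimPair a b)
    (hxq : ∑ i, a i * x i ^ 2 = 0) (hxr : ∑ i, b i * x i ^ 2 = 0)
    (hyq : ∑ i, a i * y i ^ 2 = 0) (hyr : ∑ i, b i * y i ^ 2 = 0) :
    ∃ lam : ℕ, ∀ i j k l : Fin 4, ({i, j, k, l} : Finset (Fin 4)) = Finset.univ →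
      |x k ^ 2 * y l ^ 2 - x l ^ 2 * y k ^ 2| = (lam : ℤ) * |a i * b j - a j * b i| := by
  have hprim' : ((Finset.univ.filter fun p : Fin 4 × Fin 4 => p.1 ≠ p.2).gcd
      fun p => dd a b p.1 p.2) = 1 := hprim
  simp only [Fin.sum_univ_four] at hxq hxr hyq hyr
  have h01 : (a 0 * b 1 - a 1 * b 0) * (x 3 ^ 2 * y 1 ^ 2 - x 1 ^ 2 * y 3 ^ 2) = (a 0 * b 2 - a 2 * b 0) * (x 2 ^ 2 * y 3 ^ 2 - x 3 ^ 2 * y 2 ^ 2) := by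
    linear_combination (b 0 * y 3 ^ 2) * hxq + (-a 0 * y 3 ^ 2) * hxr + (-b 0 * x 3 ^ 2) * hyq + (a 0 * x 3 ^ 2) * hyr
  have h02 : (a 0 * b 1 - a 1 * b 0) * (x 1 ^ 2 * y 2 ^ 2 - x 2 ^ 2 * y 1 ^ 2) = (a 0 * b 3 - a 3 * b 0) * (x 2 ^ 2 * y 3 ^ 2 - x 3 ^ 2 * y 2 ^ 2) := by
    linear_combination (-b 0 * y 2 ^ 2) * hxq + (a 0 * y 2 ^ 2) * hxr + (b 0 * x 2 ^ 2) * hyq + (-a 0 * x 2 ^ 2) * hyr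
  have h03 : (a 0 * b 1 - a 1 * b 0) * (x 0 ^ 2 * y 3 ^ 2 - x 3 ^ 2 * y 0 ^ 2) = (a 1 * b 2 - a 2 * b 1) * (x 2 ^ 2 * y 3 ^ 2 - x 3 ^ 2 * y 2 ^ 2) := by
    linear_combination (b 1 * y 3 ^ 2) * hxq + (-a 1 * y 3 ^ 2) * hxr + (-b 1 * x 3 ^ 2) * hyq + (a 1 * x 3 ^ 2) * hyr
  have h04 : (a 0 * b 1 - a 1 * b 0) * (x 2 ^ 2 * y 0 ^ 2 - x 0 ^ 2 * y 2 ^ 2) = (a 1 * b 3 - a 3 * b 1) * (x 2 ^ 2 * y 3 ^ 2 - x 3 ^ 2 * y 2 ^ 2) := by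
    linear_combination (-b 1 * y 2 ^ 2) * hxq + (a 1 * y 2 ^ 2) * hxr + (b 1 * x 2 ^ 2) * hyq + (-a 1 * x 2 ^ 2) * hyr
  have h05 : (a 0 * b 1 - a 1 * b 0) * (x 0 ^ 2 * y 1 ^ 2 - x 1 ^ 2 * y 0 ^ 2) = (a 2 * b 3 - a 3 * b 2) * (x 2 ^ 2 * y 3 ^ 2 - x 3 ^ 2 * y 2 ^ 2) := by
    linear_combination (-b 2 * y 2 ^ 2 - b 3 * y 3 ^ 2) * hxq + (a 2 * y 2 ^ 2 + a 3 * y 3 ^ 2) * hxr + (-b 0 * x 0 ^ 2 - b 1 * x 1 ^ 2) * hyq + (a 0 * x 0 ^ 2 + a 1 * x 1 ^ 2) * hyr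
  have h12 : (a 0 * b 2 - a 2 * b 0) * (x 1 ^ 2 * y 2 ^ 2 - x 2 ^ 2 * y 1 ^ 2) = (a 0 * b 3 - a 3 * b 0) * (x 3 ^ 2 * y 1 ^ 2 - x 1 ^ 2 * y 3 ^ 2) := by
    linear_combination (b 0 * y 1 ^ 2) * hxq + (-a 0 * y 1 ^ 2) * hxr + (-b 0 * x 1 ^ 2) * hyq + (a 0 * x 1 ^ 2) * hyr
  have h13 : (a 0 * b 2 - a 2 * b 0) * (x 0 ^ 2 * y 3 ^ 2 - x 3 ^ 2 * y 0 ^ 2) = (a 1 * b 2 - a 2 * b 1) * (x 3 ^ 2 * y 1 ^ 2 - x 1 ^ 2 * y 3 ^ 2) := by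
    linear_combination (b 2 * y 3 ^ 2) * hxq + (-a 2 * y 3 ^ 2) * hxr + (-b 2 * x 3 ^ 2) * hyq + (a 2 * x 3 ^ 2) * hyr
  have h14 : (a 0 * b 2 - a 2 * b 0) * (x 2 ^ 2 * y 0 ^ 2 - x 0 ^ 2 * y 2 ^ 2) = (a 1 * b 3 - a 3 * b 1) * (x 3 ^ 2 * y 1 ^ 2 - x 1 ^ 2 * y 3 ^ 2) := by
    linear_combination (b 1 * y 1 ^ 2 + b 3 * y 3 ^ 2) * hxq + (-a 1 * y 1 ^ 2 - a 3 * y 3 ^ 2) * hxr + (b 0 * x 0 ^ 2 + b 2 * x 2 ^ 2) * hyq + (-a 0 * x 0 ^ 2 - a 2 * x 2 ^ 2) * hyr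
  have h15 : (a 0 * b 2 - a 2 * b 0) * (x 0 ^ 2 * y 1 ^ 2 - x 1 ^ 2 * y 0 ^ 2) = (a 2 * b 3 - a 3 * b 2) * (x 3 ^ 2 * y 1 ^ 2 - x 1 ^ 2 * y 3 ^ 2) := by
    linear_combination (b 2 * y 1 ^ 2) * hxq + (-a 2 * y 1 ^ 2) * hxr + (-b 2 * x 1 ^ 2) * hyq + (a 2 * x 1 ^ 2) * hyr
  have h23 : (a 0 * b 3 - a 3 * b 0) * (x 0 ^ 2 * y 3 ^ 2 - x 3 ^ 2 * y 0 ^ 2) = (a 1 * b 2 - a 2 * b 1) * (x 1 ^ 2 * y 2 ^ 2 - x 2 ^ 2 * y 1 ^ 2) := by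
    linear_combination (b 0 * y 0 ^ 2 + b 3 * y 3 ^ 2) * hxq + (-a 0 * y 0 ^ 2 - a 3 * y 3 ^ 2) * hxr + (b 1 * x 1 ^ 2 + b 2 * x 2 ^ 2) * hyq + (-a 1 * x 1 ^ 2 - a 2 * x 2 ^ 2) * hyr
  have h24 : (a 0 * b 3 - a 3 * b 0) * (x 2 ^ 2 * y 0 ^ 2 - x 0 ^ 2 * y 2 ^ 2) = (a 1 * b 3 - a 3 * b 1) * (x 1 ^ 2 * y 2 ^ 2 - x 2 ^ 2 * y 1 ^ 2) := by
    linear_combination (-b 3 * y 2 ^ 2) * hxq + (a 3 * y 2 ^ 2) * hxr + (b 3 * x 2 ^ 2) * hyq + (-a 3 * x 2 ^ 2) * hyr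
  have h25 : (a 0 * b 3 - a 3 * b 0) * (x 0 ^ 2 * y 1 ^ 2 - x 1 ^ 2 * y 0 ^ 2) = (a 2 * b 3 - a 3 * b 2) * (x 1 ^ 2 * y 2 ^ 2 - x 2 ^ 2 * y 1 ^ 2) := by
    linear_combination (b 3 * y 1 ^ 2) * hxq + (-a 3 * y 1 ^ 2) * hxr + (-b 3 * x 1 ^ 2) * hyq + (a 3 * x 1 ^ 2) * hyr
  have h34 : (a 1 * b 2 - a 2 * b 1) * (x 2 ^ 2 * y 0 ^ 2 - x 0 ^ 2 * y 2 ^ 2) = (a 1 * b 3 - a 3 * b 1) * (x 0 ^ 2 * y 3 ^ 2 - x 3 ^ 2 * y 0 ^ 2) := by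
    linear_combination (-b 1 * y 0 ^ 2) * hxq + (a 1 * y 0 ^ 2) * hxr + (b 1 * x 0 ^ 2) * hyq + (-a 1 * x 0 ^ 2) * hyr
  have h35 : (a 1 * b 2 - a 2 * b 1) * (x 0 ^ 2 * y 1 ^ 2 - x 1 ^ 2 * y 0 ^ 2) = (a 2 * b 3 - a 3 * b 2) * (x 0 ^ 2 * y 3 ^ 2 - x 3 ^ 2 * y 0 ^ 2) := by
    linear_combination (-b 2 * y 0 ^ 2) * hxq + (a 2 * y 0 ^ 2) * hxr + (b 2 * x 0 ^ 2) * hyq + (-a 2 * x 0 ^ 2) * hyr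
  have h45 : (a 1 * b 3 - a 3 * b 1) * (x 0 ^ 2 * y 1 ^ 2 - x 1 ^ 2 * y 0 ^ 2) = (a 2 * b 3 - a 3 * b 2) * (x 2 ^ 2 * y 0 ^ 2 - x 0 ^ 2 * y 2 ^ 2) := by
    linear_combination (-b 3 * y 0 ^ 2) * hxq + (a 3 * y 0 ^ 2) * hxr + (b 3 * x 0 ^ 2) * hyq + (-a 3 * x 0 ^ 2) * hyr
  have hsym : ∀ p q : Fin 6, dd6 a b p * pp6 x y q = dd6 a b q * pp6 x y p := by
    intro p q
    fin_cases p <;> fin_cases q <;>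
      first
        | rfl
        | exact h01
        | exact h01.symm
        | exact h02
        | exact h02.symm
        | exact h03
        | exact h03.symm
        | exact h04
        | exact h04.symm
        | exact h05
        | exact h05.symm
        | exact h12
        | exact h12.symm
        | exact h13
        | exact h13.symm
        | exact h14
        | exact h14.symm
        | exact h15
        | exact h15.symm
        | exact h23
        | exact h23.symm
        | exact h24
        | exact h24.symm
        | exact h25
        | exact h25.symm
        | exact h34
        | exact h34.symm
        | exact h35
        | exact h35.symm
        | exact h45
        | exact h45.symm
  have hco : ∀ e w : ℤ, (∀ q : Fin 6, e ∣ dd6 a b q * w) → e ∣ w := by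
    intro e w h
    have h1 : e ∣ (Finset.univ.filter fun p : Fin 4 × Fin 4 => p.1 ≠ p.2).gcd
        (fun p => dd a b p.1 p.2 * w) := by
      refine Finset.dvd_gcd ?_
      intro pr hpr
      simp only [Finset.mem_filter, Finset.mem_univ, true_and] at hpr
      fin_cases pr
      · exact absurd rfl hpr
      · exact h 0
      · exact h 1
      · exact h 2
      · show e ∣ (a 1 * b 0 - a 0 * b 1) * w
        rw [show (a 1 * b 0 - a 0 * b 1) * w = -((a 0 * b 1 - a 1 * b 0) * w) from by ring]
        exact (dvd_neg).mpr (h 0)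
      · exact absurd rfl hpr
      · exact h 3
      · exact h 4
      · show e ∣ (a 2 * b 0 - a 0 * b 2) * w
        rw [show (a 2 * b 0 - a 0 * b 2) * w = -((a 0 * b 2 - a 2 * b 0) * w) from by ring]
        exact (dvd_neg).mpr (h 1)
      · show e ∣ (a 2 * b 1 - a 1 * b 2) * w
        rw [show (a 2 * b 1 - a 1 * b 2) * w = -((a 1 * b 2 - a 2 * b 1) * w) from by ring]
        exact (dvd_neg).mpr (h 3)
      · exact absurd rfl hpr
      · exact h 5
      · show e ∣ (a 3 * b 0 - a 0 * b 3) * w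
        rw [show (a 3 * b 0 - a 0 * b 3) * w = -((a 0 * b 3 - a 3 * b 0) * w) from by ring]
        exact (dvd_neg).mpr (h 2)
      · show e ∣ (a 3 * b 1 - a 1 * b 3) * w
        rw [show (a 3 * b 1 - a 1 * b 3) * w = -((a 1 * b 3 - a 3 * b 1) * w) from by ring]
        exact (dvd_neg).mpr (h 4)
      · show e ∣ (a 3 * b 2 - a 2 * b 3) * w
        rw [show (a 3 * b 2 - a 2 * b 3) * w = -((a 2 * b 3 - a 3 * b 2) * w) from by ring]
        exact (dvd_neg).mpr (h 5)
      · exact absurd rfl hpr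
    rw [Finset.gcd_mul_right, hprim', one_mul] at h1
    exact dvd_normalize_iff.mp h1
  have hne : ∃ p : Fin 6, dd6 a b p ≠ 0 := by
    by_contra hn
    push_neg at hn
    have hz : ((Finset.univ.filter fun p : Fin 4 × Fin 4 => p.1 ≠ p.2).gcd
        fun p => dd a b p.1 p.2) = 0 := by
      refine Finset.gcd_eq_zero_iff.2 ?_
      intro pr hpr
      simp only [Finset.mem_filter, Finset.mem_univ, true_and] at hpr
      fin_cases pr
      · exact absurd rfl hpr
      · exact hn 0
      · exact hn 1
      · exact hn 2
      · show a 1 * b 0 - a 0 * b 1 = 0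
        have h' : a 0 * b 1 - a 1 * b 0 = 0 := hn 0
        linarith
      · exact absurd rfl hpr
      · exact hn 3
      · exact hn 4
      · show a 2 * b 0 - a 0 * b 2 = 0
        have h' : a 0 * b 2 - a 2 * b 0 = 0 := hn 1
        linarith
      · show a 2 * b 1 - a 1 * b 2 = 0
        have h' : a 1 * b 2 - a 2 * b 1 = 0 := hn 3
        linarith
      · exact absurd rfl hpr
      · exact hn 5
      · show a 3 * b 0 - a 0 * b 3 = 0
        have h' : a 0 * b 3 - a 3 * b 0 = 0 := hn 2
        linarith
      · show a 3 * b 1 - a 1 * b 3 = 0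
        have h' : a 1 * b 3 - a 3 * b 1 = 0 := hn 4
        linarith
      · show a 3 * b 2 - a 2 * b 3 = 0
        have h' : a 2 * b 3 - a 3 * b 2 = 0 := hn 5
        linarith
      · exact absurd rfl hpr
    rw [hz] at hprim'
    exact absurd hprim' (by decide)
  obtain ⟨c, hc⟩ := exists_ratio (dd6 a b) (pp6 x y) hsym hne hco
  have hc0 : (x 2 ^ 2 * y 3 ^ 2 - x 3 ^ 2 * y 2 ^ 2) = c * (a 0 * b 1 - a 1 * b 0) := hc 0
  have hc1 : (x 3 ^ 2 * y 1 ^ 2 - x 1 ^ 2 * y 3 ^ 2) = c * (a 0 * b 2 - a 2 * b 0) := hc 1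
  have hc2 : (x 1 ^ 2 * y 2 ^ 2 - x 2 ^ 2 * y 1 ^ 2) = c * (a 0 * b 3 - a 3 * b 0) := hc 2
  have hc3 : (x 0 ^ 2 * y 3 ^ 2 - x 3 ^ 2 * y 0 ^ 2) = c * (a 1 * b 2 - a 2 * b 1) := hc 3
  have hc4 : (x 2 ^ 2 * y 0 ^ 2 - x 0 ^ 2 * y 2 ^ 2) = c * (a 1 * b 3 - a 3 * b 1) := hc 4
  have hc5 : (x 0 ^ 2 * y 1 ^ 2 - x 1 ^ 2 * y 0 ^ 2) = c * (a 2 * b 3 - a 3 * b 2) := hc 5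
  refine ⟨c.natAbs, ?_⟩
  intro i j k l hset
  fin_cases i <;> fin_cases j <;> fin_cases k <;> fin_cases l
  · exact absurd hset (by decide)
  · exact absurd hset (by decide)
  · exact absurd hset (by decide)
  · exact absurd hset (by decide)
  · exact absurd hset (by decide)
  · exact absurd hset (by decide)
  · exact absurd hset (by decide)
  · exact absurd hset (by decide)
  · exact absurd hset (by decide)
  · exact absurd hset (by decide)
  · exact absurd hset (by decide)
  · exact absurd hset (by decide)
  · exact absurd hset (by decide)
  · exact absurd hset (by decide)
  · exact absurd hset (by decide)
  · exact absurd hset (by decide)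
  · exact absurd hset (by decide)
  · exact absurd hset (by decide)
  · exact absurd hset (by decide)
  · exact absurd hset (by decide)
  · exact absurd hset (by decide)
  · exact absurd hset (by decide)
  · exact absurd hset (by decide)
  · exact absurd hset (by decide)
  · exact absurd hset (by decide)
  · exact absurd hset (by decide)
  · exact absurd hset (by decide)
  · exact abs_helper5 c _ _ _ _ hc0 rfl rfl
  · exact absurd hset (by decide)
  · exact absurd hset (by decide)
  · exact abs_helper5 c _ _ _ _ hc0 (abs_sub_comm _ _) rfl
  · exact absurd hset (by decide)
  · exact absurd hset (by decide)
  · exact absurd hset (by decide)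
  · exact absurd hset (by decide)
  · exact absurd hset (by decide)
  · exact absurd hset (by decide)
  · exact absurd hset (by decide)
  · exact absurd hset (by decide)
  · exact abs_helper5 c _ _ _ _ hc1 (abs_sub_comm _ _) rfl
  · exact absurd hset (by decide)
  · exact absurd hset (by decide)
  · exact absurd hset (by decide)
  · exact absurd hset (by decide)
  · exact absurd hset (by decide)
  · exact abs_helper5 c _ _ _ _ hc1 rfl rfl
  · exact absurd hset (by decide)
  · exact absurd hset (by decide)
  · exact absurd hset (by decide)
  · exact absurd hset (by decide)
  · exact absurd hset (by decide)
  · exact absurd hset (by decide)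
  · exact absurd hset (by decide)
  · exact absurd hset (by decide)
  · exact abs_helper5 c _ _ _ _ hc2 rfl rfl
  · exact absurd hset (by decide)
  · exact absurd hset (by decide)
  · exact abs_helper5 c _ _ _ _ hc2 (abs_sub_comm _ _) rfl
  · exact absurd hset (by decide)
  · exact absurd hset (by decide)
  · exact absurd hset (by decide)
  · exact absurd hset (by decide)
  · exact absurd hset (by decide)
  · exact absurd hset (by decide)
  · exact absurd hset (by decide)
  · exact absurd hset (by decide)
  · exact absurd hset (by decide)
  · exact absurd hset (by decide)
  · exact absurd hset (by decide)
  · exact absurd hset (by decide)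
  · exact absurd hset (by decide)
  · exact absurd hset (by decide)
  · exact absurd hset (by decide)
  · exact absurd hset (by decide)
  · exact absurd hset (by decide)
  · exact abs_helper5 c _ _ _ _ hc0 rfl (abs_sub_comm _ _)
  · exact absurd hset (by decide)
  · exact absurd hset (by decide)
  · exact abs_helper5 c _ _ _ _ hc0 (abs_sub_comm _ _) (abs_sub_comm _ _)
  · exact absurd hset (by decide)
  · exact absurd hset (by decide)
  · exact absurd hset (by decide)
  · exact absurd hset (by decide)
  · exact absurd hset (by decide)
  · exact absurd hset (by decide)
  · exact absurd hset (by decide)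
  · exact absurd hset (by decide)
  · exact absurd hset (by decide)
  · exact absurd hset (by decide)
  · exact absurd hset (by decide)
  · exact absurd hset (by decide)
  · exact absurd hset (by decide)
  · exact absurd hset (by decide)
  · exact absurd hset (by decide)
  · exact absurd hset (by decide)
  · exact absurd hset (by decide)
  · exact absurd hset (by decide)
  · exact absurd hset (by decide)
  · exact absurd hset (by decide)
  · exact abs_helper5 c _ _ _ _ hc3 rfl rfl
  · exact absurd hset (by decide)
  · exact absurd hset (by decide)
  · exact absurd hset (by decide)
  · exact absurd hset (by decide)
  · exact absurd hset (by decide)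
  · exact absurd hset (by decide)
  · exact absurd hset (by decide)
  · exact absurd hset (by decide)
  · exact abs_helper5 c _ _ _ _ hc3 (abs_sub_comm _ _) rfl
  · exact absurd hset (by decide)
  · exact absurd hset (by decide)
  · exact absurd hset (by decide)
  · exact absurd hset (by decide)
  · exact absurd hset (by decide)
  · exact abs_helper5 c _ _ _ _ hc4 (abs_sub_comm _ _) rfl
  · exact absurd hset (by decide)
  · exact absurd hset (by decide)
  · exact absurd hset (by decide)
  · exact absurd hset (by decide)
  · exact absurd hset (by decide)
  · exact abs_helper5 c _ _ _ _ hc4 rfl rfl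
  · exact absurd hset (by decide)
  · exact absurd hset (by decide)
  · exact absurd hset (by decide)
  · exact absurd hset (by decide)
  · exact absurd hset (by decide)
  · exact absurd hset (by decide)
  · exact absurd hset (by decide)
  · exact absurd hset (by decide)
  · exact absurd hset (by decide)
  · exact absurd hset (by decide)
  · exact absurd hset (by decide)
  · exact absurd hset (by decide)
  · exact absurd hset (by decide)
  · exact absurd hset (by decide)
  · exact abs_helper5 c _ _ _ _ hc1 (abs_sub_comm _ _) (abs_sub_comm _ _)
  · exact absurd hset (by decide)
  · exact absurd hset (by decide)
  · exact absurd hset (by decide)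
  · exact absurd hset (by decide)
  · exact absurd hset (by decide)
  · exact abs_helper5 c _ _ _ _ hc1 rfl (abs_sub_comm _ _)
  · exact absurd hset (by decide)
  · exact absurd hset (by decide)
  · exact absurd hset (by decide)
  · exact absurd hset (by decide)
  · exact absurd hset (by decide)
  · exact abs_helper5 c _ _ _ _ hc3 rfl (abs_sub_comm _ _)
  · exact absurd hset (by decide)
  · exact absurd hset (by decide)
  · exact absurd hset (by decide)
  · exact absurd hset (by decide)
  · exact absurd hset (by decide)
  · exact absurd hset (by decide)
  · exact absurd hset (by decide)
  · exact absurd hset (by decide)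
  · exact abs_helper5 c _ _ _ _ hc3 (abs_sub_comm _ _) (abs_sub_comm _ _)
  · exact absurd hset (by decide)
  · exact absurd hset (by decide)
  · exact absurd hset (by decide)
  · exact absurd hset (by decide)
  · exact absurd hset (by decide)
  · exact absurd hset (by decide)
  · exact absurd hset (by decide)
  · exact absurd hset (by decide)
  · exact absurd hset (by decide)
  · exact absurd hset (by decide)
  · exact absurd hset (by decide)
  · exact absurd hset (by decide)
  · exact absurd hset (by decide)
  · exact absurd hset (by decide)
  · exact absurd hset (by decide)
  · exact absurd hset (by decide)
  · exact absurd hset (by decide)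
  · exact absurd hset (by decide)
  · exact absurd hset (by decide)
  · exact absurd hset (by decide)
  · exact abs_helper5 c _ _ _ _ hc5 rfl rfl
  · exact absurd hset (by decide)
  · exact absurd hset (by decide)
  · exact abs_helper5 c _ _ _ _ hc5 (abs_sub_comm _ _) rfl
  · exact absurd hset (by decide)
  · exact absurd hset (by decide)
  · exact absurd hset (by decide)
  · exact absurd hset (by decide)
  · exact absurd hset (by decide)
  · exact absurd hset (by decide)
  · exact absurd hset (by decide)
  · exact absurd hset (by decide)
  · exact absurd hset (by decide)
  · exact absurd hset (by decide)
  · exact absurd hset (by decide)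
  · exact absurd hset (by decide)
  · exact absurd hset (by decide)
  · exact absurd hset (by decide)
  · exact absurd hset (by decide)
  · exact absurd hset (by decide)
  · exact absurd hset (by decide)
  · exact abs_helper5 c _ _ _ _ hc2 rfl (abs_sub_comm _ _)
  · exact absurd hset (by decide)
  · exact absurd hset (by decide)
  · exact abs_helper5 c _ _ _ _ hc2 (abs_sub_comm _ _) (abs_sub_comm _ _)
  · exact absurd hset (by decide)
  · exact absurd hset (by decide)
  · exact absurd hset (by decide)
  · exact absurd hset (by decide)
  · exact absurd hset (by decide)
  · exact absurd hset (by decide)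
  · exact absurd hset (by decide)
  · exact absurd hset (by decide)
  · exact abs_helper5 c _ _ _ _ hc4 (abs_sub_comm _ _) (abs_sub_comm _ _)
  · exact absurd hset (by decide)
  · exact absurd hset (by decide)
  · exact absurd hset (by decide)
  · exact absurd hset (by decide)
  · exact absurd hset (by decide)
  · exact abs_helper5 c _ _ _ _ hc4 rfl (abs_sub_comm _ _)
  · exact absurd hset (by decide)
  · exact absurd hset (by decide)
  · exact absurd hset (by decide)
  · exact absurd hset (by decide)
  · exact absurd hset (by decide)
  · exact absurd hset (by decide)
  · exact absurd hset (by decide)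
  · exact absurd hset (by decide)
  · exact abs_helper5 c _ _ _ _ hc5 rfl (abs_sub_comm _ _)
  · exact absurd hset (by decide)
  · exact absurd hset (by decide)
  · exact abs_helper5 c _ _ _ _ hc5 (abs_sub_comm _ _) (abs_sub_comm _ _)
  · exact absurd hset (by decide)
  · exact absurd hset (by decide)
  · exact absurd hset (by decide)
  · exact absurd hset (by decide)
  · exact absurd hset (by decide)
  · exact absurd hset (by decide)
  · exact absurd hset (by decide)
  · exact absurd hset (by decide)
  · exact absurd hset (by decide)
  · exact absurd hset (by decide)
  · exact absurd hset (by decide)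
  · exact absurd hset (by decide)
  · exact absurd hset (by decide)
  · exact absurd hset (by decide)
  · exact absurd hset (by decide)
  · exact absurd hset (by decide)
  · exact absurd hset (by decide)
  · exact absurd hset (by decide)
  · exact absurd hset (by decide)
  · exact absurd hset (by decide)
  · exact absurd hset (by decide)
  · exact absurd hset (by decide)
  · exact absurd hset (by decide)
  · exact absurd hset (by decide)
  · exact absurd hset (by decide)
  · exact absurd hset (by decide)
  · exact absurd hset (by decide)
end

section
/- Let q(x₀,x₁,x₂,x₃) = a₀x₀² + a₁x₁² + a₂x₂² + a₃x₃² and r(x₀,x₁,x₂,x₃) = b₀x₀² + b₁x₁² + b₂x₂² + b₃x₃² be a primitive pair of diagonal quadratic forms with integer coefficients such that d_ij = a_i b_j − a_j b_i ≠ 0 for all 0 ≤ i < j ≤ 3, and let p be an odd prime not dividing ∏_{0≤i<j≤3} d_ij. Let s ≥ 1 and let F₁, ..., F_s be monomials in x₀,x₁,x₂,x₃, all of the same degree d ≥ 1. Let x⁽¹⁾, ..., x⁽ˢ⁾ ∈ ℤ⁴ be quadruples of coprime integers with q(x⁽ⁱ⁾) = r(x⁽ⁱ⁾) = 0 for all i,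 whose reductions modulo p all define the same point of ℙ³(F_p). Then p^{s(s−1)/2} divides the integer det((F_j(x⁽ⁱ⁾))_{1≤i,j≤s}). -/
open scoped BigOperators

open Polynomial

/-- Any `n` distinct naturals sum to at least `0 + 1 + ⋯ + (n-1)`. -/
lemma sum_distinct_ge (n : ℕ) : ∀ T : Finset ℕ, T.card = n →
    ∑ i ∈ Finset.range n, i ≤ ∑ x ∈ T, x := by
  induction n with
  | zero => intro T h; simp
  | succ n ih =>
    intro T h
    have hne : T.Nonempty := Finset.card_pos.mp (by omega)
    have hM : T.max' hne ∈ T := T.max'_mem hne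
    have h1 : (T.erase (T.max' hne)).card = n := by
      rw [Finset.card_erase_of_mem hM, h]; omega
    have h2 : n ≤ T.max' hne := by
      have hsub : T ⊆ Finset.range (T.max' hne + 1) := by
        intro x hx
        exact Finset.mem_range.mpr (Nat.lt_succ_of_le (Finset.le_max' T x hx))
      have := Finset.card_le_card hsub
      rw [h, Finset.card_range] at this
      omega
    calc ∑ i ∈ Finset.range (n+1), i = (∑ i ∈ Finset.range n, i) + n := Finset.sum_range_succ _ _
      _ ≤ (∑ x ∈ T.erase (T.max' hne), x) + T.max' hne :=
          Nat.add_le_add (ih _ h1) h2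
      _ = ∑ x ∈ T, x := Finset.sum_erase_add T _ hM

lemma sum_inj_ge (s : ℕ) (κ : Fin s → ℕ) (hκ : Function.Injective κ) :
    s * (s-1) / 2 ≤ ∑ i, κ i := by
  rw [← Finset.sum_range_id]
  calc ∑ i ∈ Finset.range s, i ≤ ∑ x ∈ Finset.image κ Finset.univ, x :=
        sum_distinct_ge s _
          (by rw [Finset.card_image_of_injective _ hκ, Finset.card_univ, Fintype.card_fin])
    _ = ∑ i, κ i := Finset.sum_image (fun a _ b _ h => hκ h)

/-- The key determinant divisibility: a matrix whose `(i,j)` entry is a polynomial `Q j`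
evaluated at parameters `T i` that are all congruent mod `p` has determinant divisible by
`p^{s(s-1)/2}`. -/
lemma det_dvd_param (p : ℕ) (s : ℕ) (Q : Fin s → Polynomial ℤ) (T : Fin s → ℤ) (τ : ℤ)
    (h : ∀ i, (p:ℤ) ∣ T i - τ) :
    (p:ℤ) ^ (s * (s-1) / 2) ∣ Matrix.det (Matrix.of fun i j => (Q j).eval (T i)) := by
  choose e he using fun i => h i
  set R : Fin s → Polynomial ℤ := fun j => (Q j).comp (Polynomial.X + Polynomial.C τ) with hR
  set K := (Finset.univ.sup fun j : Fin s => (R j).natDegree) + 1 with hK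
  have hdeg : ∀ j, (R j).natDegree < K := fun j =>
    Nat.lt_succ_of_le (Finset.le_sup (f := fun j => (R j).natDegree) (Finset.mem_univ j))
  have hev : ∀ i j, (Q j).eval (T i) =
      ∑ k ∈ Finset.range K, (R j).coeff k * ((p:ℤ) * e i)^k := by
    intro i j
    have h1 : (Q j).eval (T i) = (R j).eval ((p:ℤ) * e i) := by
      rw [hR, Polynomial.eval_comp]
      congr 1
      simp only [Polynomial.eval_add, Polynomial.eval_X, Polynomial.eval_C]
      linarith [he i]
    rw [h1, Polynomial.eval_eq_sum_range' (hdeg j)]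
  have hdet : Matrix.det (Matrix.of fun i j => (Q j).eval (T i)) =
      ∑ r ∈ Fintype.piFinset (fun _ : Fin s => Finset.range K),
        Matrix.det (Matrix.of fun i j => (R j).coeff (r i) * ((p:ℤ) * e i)^(r i)) := by
    have := (Matrix.detRowAlternating (R := ℤ) (n := Fin s)).toMultilinearMap.map_sum_finset
      (g := fun i k => (fun j => (R j).coeff k * ((p:ℤ) * e i)^k))
      (A := fun _ => Finset.range K)
    have hrows : (fun i => ∑ k ∈ Finset.range K,
        (fun j => (R j).coeff k * ((p:ℤ) * e i)^k)) =
        (Matrix.of fun i j => (Q j).eval (T i) : Matrix (Fin s) (Fin s) ℤ) := by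
      funext i j
      simp only [Matrix.of_apply, Finset.sum_apply]
      exact (hev i j).symm
    rw [hrows] at this
    exact this
  rw [hdet]
  apply Finset.dvd_sum
  intro r _
  have hfac : Matrix.det (Matrix.of fun i j => (R j).coeff (r i) * ((p:ℤ) * e i)^(r i)) =
      (∏ i, ((p:ℤ) * e i)^(r i)) * Matrix.det (Matrix.of fun i j => (R j).coeff (r i)) := by
    rw [← Matrix.det_mul_column (fun i => ((p:ℤ) * e i)^(r i))]
    congr 1
    ext i j
    simp [mul_comm]
  rw [hfac]
  by_cases hinj : Function.Injective r
  · apply Dvd.dvd.mul_right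
    have : (∏ i, ((p:ℤ) * e i)^(r i)) = (p:ℤ)^(∑ i, r i) * ∏ i, (e i)^(r i) := by
      rw [← Finset.prod_pow_eq_pow_sum, ← Finset.prod_mul_distrib]
      congr 1; funext i; rw [mul_pow]
    rw [this]
    exact Dvd.dvd.mul_right (pow_dvd_pow _ (sum_inj_ge s r hinj)) _
  · rw [Function.not_injective_iff] at hinj
    obtain ⟨i, i', heq, hne⟩ := hinj
    have hz : Matrix.det (Matrix.of fun i j => (R j).coeff (r i)) = 0 :=
      Matrix.det_zero_of_row_eq hne (by funext j; simp only [Matrix.of_apply]; rw [heq])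
    rw [hz, mul_zero]
    exact dvd_zero _

/-- Hensel-style parametrisation of the integral points of the curve lying over a fixed
smooth point mod `p`: the `j1`- and `j2`-coordinates are polynomial functions of the
`c`-coordinate, mod `p^N`. -/
lemma hensel_curve (p : ℕ) (hp : p.Prime) (N : ℕ)
    (A1 A2 Ac Am B1 B2 Bc Bm : ℤ) {s : ℕ} (u v t w : Fin s → ℤ)
    (u0 v0 : ℤ)
    (hq : ∀ i, A1*(u i)^2 + A2*(v i)^2 + Ac*(t i)^2 + Am*(w i)^2 = 0)
    (hr : ∀ i, B1*(u i)^2 + B2*(v i)^2 + Bc*(t i)^2 + Bm*(w i)^2 = 0)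
    (hw : ∀ i, (p:ℤ)^N ∣ (w i)^2 - 1)
    (hu : ∀ i, (p:ℤ) ∣ u i - u0) (hv : ∀ i, (p:ℤ) ∣ v i - v0)
    (hΔ : ¬ (p:ℤ) ∣ 4*u0*v0*(A1*B2 - A2*B1)) :
    ∃ U V : Polynomial ℤ, ∀ i,
      ((p:ℤ)^N ∣ u i - U.eval (t i)) ∧ ((p:ℤ)^N ∣ v i - V.eval (t i)) := by
  rcases Nat.eq_zero_or_pos N with hN | hN
  · exact ⟨0, 0, fun i => by simp [hN]⟩
  set α := 2*A1*u0 with hα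
  set β := 2*A2*v0 with hβ
  set γ := 2*B1*u0 with hγ
  set ε := 2*B2*v0 with hε
  set Δ := 4*u0*v0*(A1*B2 - A2*B1) with hΔdef0
  have hΔdef : α*ε - β*γ = Δ := by rw [hα, hβ, hγ, hε, hΔdef0]; ring
  have hcop : IsCoprime ((p:ℤ)^N) Δ :=
    (((Nat.prime_iff_prime_int.mp hp).coprime_iff_not_dvd).mpr hΔ).pow_left
  obtain ⟨c0, Δ', hΔ'⟩ := hcop
  have hone : (p:ℤ)^N ∣ 1 - Δ'*Δ := ⟨c0, by linarith [hΔ']⟩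
  have main : ∀ k : ℕ, 1 ≤ k → k ≤ N → ∃ U V : Polynomial ℤ, ∀ i,
      ((p:ℤ)^k ∣ u i - U.eval (t i)) ∧ ((p:ℤ)^k ∣ v i - V.eval (t i)) := by
    intro k
    induction k with
    | zero => omega
    | succ k ih =>
      intro _ hkN
      rcases Nat.eq_zero_or_pos k with hk0 | hk1
      · subst hk0
        exact ⟨Polynomial.C u0, Polynomial.C v0, fun i => by
          simpa using ⟨hu i, hv i⟩⟩
      obtain ⟨U, V, hUV⟩ := ih hk1 (by omega)
      set Fp : Polynomial ℤ := Polynomial.C A1 * U^2 + Polynomial.C A2 * V^2 +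
        Polynomial.C Ac * Polynomial.X^2 + Polynomial.C Am with hFp
      set Gp : Polynomial ℤ := Polynomial.C B1 * U^2 + Polynomial.C B2 * V^2 +
        Polynomial.C Bc * Polynomial.X^2 + Polynomial.C Bm with hGp
      refine ⟨U - Polynomial.C (Δ'*ε) * Fp + Polynomial.C (Δ'*β) * Gp,
              V + Polynomial.C (Δ'*γ) * Fp - Polynomial.C (Δ'*α) * Gp, ?_⟩
      intro i
      obtain ⟨hdu, hdv⟩ := hUV i
      set uu := u i; set vv := v i; set tt := t i; set ww := w i
      set ue := U.eval tt with hue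
      set ve := V.eval tt with hve
      set Fe := A1*ue^2 + A2*ve^2 + Ac*tt^2 + Am with hFe
      set Ge := B1*ue^2 + B2*ve^2 + Bc*tt^2 + Bm with hGe
      have hFeval : Fp.eval tt = Fe := by rw [hFp, hFe]; simp [hue, hve]
      have hGeval : Gp.eval tt = Ge := by rw [hGp, hGe]; simp [hue, hve]
      have hpdu : (p:ℤ) ∣ uu - ue := dvd_trans (dvd_pow_self _ (by omega : k ≠ 0)) hdu
      have hpdv : (p:ℤ) ∣ vv - ve := dvd_trans (dvd_pow_self _ (by omega : k ≠ 0)) hdv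
      have hA : (p:ℤ) ∣ A1*(uu+ue) - α := by
        have : A1*(uu+ue) - α = A1*((uu-u0) + ((uu-u0) - (uu-ue))) := by rw [hα]; ring
        rw [this]
        exact ((hu i).add ((hu i).sub hpdu)).mul_left _
      have hB : (p:ℤ) ∣ A2*(vv+ve) - β := by
        have : A2*(vv+ve) - β = A2*((vv-v0) + ((vv-v0) - (vv-ve))) := by rw [hβ]; ring
        rw [this]
        exact ((hv i).add ((hv i).sub hpdv)).mul_left _
      have hC : (p:ℤ) ∣ B1*(uu+ue) - γ := by
        have : B1*(uu+ue) - γ = B1*((uu-u0) + ((uu-u0) - (uu-ue))) := by rw [hγ]; ring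
        rw [this]
        exact ((hu i).add ((hu i).sub hpdu)).mul_left _
      have hD : (p:ℤ) ∣ B2*(vv+ve) - ε := by
        have : B2*(vv+ve) - ε = B2*((vv-v0) + ((vv-v0) - (vv-ve))) := by rw [hε]; ring
        rw [this]
        exact ((hv i).add ((hv i).sub hpdv)).mul_left _
      have hNk : (p:ℤ)^(k+1) ∣ (p:ℤ)^N := pow_dvd_pow _ hkN
      have hC1 : (p:ℤ)^(k+1) ∣ Fe + (α*(uu-ue) + β*(vv-ve)) := by
        have e1 : Fe + (α*(uu-ue) + β*(vv-ve)) =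
            -((A1*(uu+ue) - α) * (uu-ue)) - ((A2*(vv+ve) - β) * (vv-ve))
              + Am*(1-ww^2) := by
          rw [hFe]; linear_combination hq i
        rw [e1]
        refine dvd_add (dvd_sub (dvd_neg.mpr ?_) ?_) ?_
        · rw [pow_succ']; exact mul_dvd_mul hA hdu
        · rw [pow_succ']; exact mul_dvd_mul hB hdv
        · have : Am*(1-ww^2) = -(Am * (ww^2 - 1)) := by ring
          rw [this]
          exact dvd_neg.mpr (hNk.trans ((hw i).mul_left Am))
      have hC2 : (p:ℤ)^(k+1) ∣ Ge + (γ*(uu-ue) + ε*(vv-ve)) := by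
        have e1 : Ge + (γ*(uu-ue) + ε*(vv-ve)) =
            -((B1*(uu+ue) - γ) * (uu-ue)) - ((B2*(vv+ve) - ε) * (vv-ve))
              + Bm*(1-ww^2) := by
          rw [hGe]; linear_combination hr i
        rw [e1]
        refine dvd_add (dvd_sub (dvd_neg.mpr ?_) ?_) ?_
        · rw [pow_succ']; exact mul_dvd_mul hC hdu
        · rw [pow_succ']; exact mul_dvd_mul hD hdv
        · have : Bm*(1-ww^2) = -(Bm * (ww^2 - 1)) := by ring
          rw [this]
          exact dvd_neg.mpr (hNk.trans ((hw i).mul_left Bm))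
      constructor
      · have hev : (U - Polynomial.C (Δ'*ε) * Fp + Polynomial.C (Δ'*β) * Gp).eval tt =
            ue - Δ'*ε*Fe + Δ'*β*Ge := by
          simp [hFeval, hGeval, hue]
        rw [hev]
        have egoal : uu - (ue - Δ'*ε*Fe + Δ'*β*Ge) =
            Δ'*ε*(Fe + (α*(uu-ue) + β*(vv-ve))) - Δ'*β*(Ge + (γ*(uu-ue) + ε*(vv-ve)))
              + (1 - Δ'*Δ)*(uu-ue) := by
          linear_combination (Δ' * (uu-ue)) * hΔdef
        rw [egoal]
        refine dvd_add (dvd_sub (hC1.mul_left _) (hC2.mul_left _)) ?_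
        exact (hNk.trans hone).mul_right _
      · have hev : (V + Polynomial.C (Δ'*γ) * Fp - Polynomial.C (Δ'*α) * Gp).eval tt =
            ve + Δ'*γ*Fe - Δ'*α*Ge := by
          simp [hFeval, hGeval, hve]
        rw [hev]
        have egoal : vv - (ve + Δ'*γ*Fe - Δ'*α*Ge) =
            -(Δ'*γ*(Fe + (α*(uu-ue) + β*(vv-ve)))) + Δ'*α*(Ge + (γ*(uu-ue) + ε*(vv-ve)))
              + (1 - Δ'*Δ)*(vv-ve) := by
          linear_combination (Δ' * (vv-ve)) * hΔdef
        rw [egoal]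
        refine dvd_add (dvd_add (dvd_neg.mpr (hC1.mul_left _)) (hC2.mul_left _)) ?_
        exact (hNk.trans hone).mul_right _
  obtain ⟨U, V, hUV⟩ := main N hN le_rfl
  exact ⟨U, V, hUV⟩

lemma fin4_pair_compl : ∀ w1 w2 : Fin 4, w1 ≠ w2 → ∃ w3 w4 : Fin 4,
    w3 ≠ w4 ∧ w3 ≠ w1 ∧ w3 ≠ w2 ∧ w4 ≠ w1 ∧ w4 ≠ w2 ∧
    (Finset.univ : Finset (Fin 4)) = {w1, w2, w3, w4} := by decide

lemma fin4_cover : ∀ m j1 j2 c : Fin 4, m ≠ j1 → m ≠ j2 → j1 ≠ j2 → c ≠ m → c ≠ j1 → c ≠ j2 →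
    (Finset.univ : Finset (Fin 4)) = {c, m, j1, j2} := by decide

lemma fin4_choice : ∀ m j1 j2 : Fin 4, m ≠ j1 → m ≠ j2 → j1 ≠ j2 →
    ∃ c : Fin 4, c ≠ m ∧ c ≠ j1 ∧ c ≠ j2 := by decide

lemma sum4 {w1 w2 w3 w4 : Fin 4} (h12 : w1≠w2) (h13 : w1≠w3) (h14 : w1≠w4)
    (h23 : w2≠w3) (h24 : w2≠w4) (h34 : w3≠w4)
    (huniv : (Finset.univ : Finset (Fin 4)) = {w1,w2,w3,w4}) (f : Fin 4 → ℤ) :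
    ∑ t, f t = f w1 + f w2 + f w3 + f w4 := by
  rw [huniv, Finset.sum_insert (by simp [h12, h13, h14]),
    Finset.sum_insert (by simp [h23, h24]), Finset.sum_pair h34]
  ring

/-- Let `q, r` be a primitive pair of diagonal quadratic forms with all
`d_ij ≠ 0`, and `p` an odd prime of good reduction. If `F₁, …, F_s` are monomials of a common
degree `D ≥ 1` and `x⁽¹⁾, …, x⁽ˢ⁾` are coprime integral zeros of `q` and `r` whose reductions
mod `p` define the same point of `ℙ³(𝔽_p)`, then `p^{s(s-1)/2} ∣ det(F_j(x⁽ⁱ⁾))`. -/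
theorem statement8 (a b : Fin 4 → ℤ) (hprim : PrimPair a b)
    (hnd : ∀ i j : Fin 4, i < j → dd a b i j ≠ 0)
    (p : ℕ) (hp : p.Prime) (hodd : p ≠ 2)
    (hgood : ¬ (p : ℤ) ∣
      ∏ pr ∈ Finset.univ.filter fun pr : Fin 4 × Fin 4 => pr.1 < pr.2, dd a b pr.1 pr.2)
    (s : ℕ) (hs : 1 ≤ s) (D : ℕ) (hD : 1 ≤ D)
    (d : Fin s → (Fin 4 →₀ ℕ)) (hdeg : ∀ j, (d j).sum (fun _ e => e) = D)
    (x : Fin s → (Fin 4 → ℤ))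
    (hgcd : ∀ i, Finset.univ.gcd (x i) = 1)
    (hxq : ∀ i, ∑ t, a t * x i t ^ 2 = 0)
    (hxr : ∀ i, ∑ t, b t * x i t ^ 2 = 0)
    (hred : ∀ i i' : Fin s, ∃ u : (ZMod p)ˣ,
      ∀ t, ((x i' t : ZMod p)) = (u : ZMod p) * (x i t : ZMod p)) :
    (p : ℤ) ^ (s * (s - 1) / 2) ∣
      Matrix.det (Matrix.of fun i j => (d j).prod fun t e => x i t ^ e) := by
  by_cases hstriv : s * (s - 1) / 2 = 0
  · rw [hstriv, pow_zero]; exact one_dvd _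
  have hN1 : 1 ≤ s * (s - 1) / 2 := Nat.pos_of_ne_zero hstriv
  have hpI : Prime (p:ℤ) := Nat.prime_iff_prime_int.mp hp
  haveI : Fact p.Prime := ⟨hp⟩
  have hp1 : ¬ (p:ℤ) ∣ 1 := by
    intro h
    have h' : p ∣ 1 := by exact_mod_cast h
    exact hp.one_lt.ne' (Nat.dvd_one.mp h')
  set i₀ : Fin s := ⟨0, by omega⟩ with hi₀
  -- p does not divide all coordinates of a point
  have hnotall : ∀ i, ¬ ∀ t : Fin 4, (p:ℤ) ∣ x i t := by
    intro i hall
    apply hp1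
    rw [← hgcd i]
    exact Finset.dvd_gcd fun t _ => hall t
  -- p divides no d_ij, i ≠ j
  have hgood' : ∀ i j : Fin 4, i ≠ j → ¬ (p:ℤ) ∣ dd a b i j := by
    intro i j hij hdvd
    apply hgood
    rcases hij.lt_or_gt with h | h
    · have hmem : ((i, j) : Fin 4 × Fin 4) ∈
          Finset.univ.filter (fun pr : Fin 4 × Fin 4 => pr.1 < pr.2) := by simp [h]
      exact hdvd.trans (Finset.dvd_prod_of_mem _ hmem)
    · have e : dd a b j i = -(dd a b i j) := by simp only [dd]; ring
      have hdvd' : (p:ℤ) ∣ dd a b j i := by rw [e]; exact dvd_neg.mpr hdvd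
      have hmem : ((j, i) : Fin 4 × Fin 4) ∈
          Finset.univ.filter (fun pr : Fin 4 × Fin 4 => pr.1 < pr.2) := by simp [h]
      exact hdvd'.trans (Finset.dvd_prod_of_mem _ hmem)
  -- at most one coordinate of x i₀ is divisible by p
  have hbad : ∀ w1 w2 : Fin 4, w1 ≠ w2 → (p:ℤ) ∣ x i₀ w1 → (p:ℤ) ∣ x i₀ w2 → False := by
    intro w1 w2 hne h1 h2
    obtain ⟨w3, w4, h34, h31, h32, h41, h42, huniv⟩ := fin4_pair_compl w1 w2 hne
    have hq0 := hxq i₀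
    have hr0 := hxr i₀
    rw [sum4 hne h31.symm h41.symm h32.symm h42.symm h34 huniv] at hq0 hr0
    obtain ⟨c1, hc1⟩ := h1
    obtain ⟨c2, hc2⟩ := h2
    have h3 : (p:ℤ) ∣ dd a b w3 w4 * (x i₀ w3)^2 := by
      refine ⟨-(b w4 * a w1 - a w4 * b w1) * p * c1^2 - (b w4 * a w2 - a w4 * b w2) * p * c2^2, ?_⟩
      simp only [dd]
      linear_combination (b w4) * hq0 - (a w4) * hr0 -
        (b w4 * a w1 - a w4 * b w1) * (x i₀ w1 + (p:ℤ)*c1) * hc1 -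
        (b w4 * a w2 - a w4 * b w2) * (x i₀ w2 + (p:ℤ)*c2) * hc2
    have h4 : (p:ℤ) ∣ dd a b w3 w4 * (x i₀ w4)^2 := by
      refine ⟨(b w3 * a w1 - a w3 * b w1) * p * c1^2 + (b w3 * a w2 - a w3 * b w2) * p * c2^2, ?_⟩
      simp only [dd]
      linear_combination (-(b w3)) * hq0 + (a w3) * hr0 +
        (b w3 * a w1 - a w3 * b w1) * (x i₀ w1 + (p:ℤ)*c1) * hc1 +
        (b w3 * a w2 - a w3 * b w2) * (x i₀ w2 + (p:ℤ)*c2) * hc2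
    have h5 : (p:ℤ) ∣ x i₀ w3 := by
      rcases (hpI.dvd_mul).mp h3 with h | h
      · exact absurd h (hgood' w3 w4 h34)
      · exact hpI.dvd_of_dvd_pow h
    have h6 : (p:ℤ) ∣ x i₀ w4 := by
      rcases (hpI.dvd_mul).mp h4 with h | h
      · exact absurd h (hgood' w3 w4 h34)
      · exact hpI.dvd_of_dvd_pow h
    apply hnotall i₀
    intro t
    have ht : t ∈ ({w1,w2,w3,w4} : Finset (Fin 4)) := by
      rw [← huniv]; exact Finset.mem_univ t
    simp only [Finset.mem_insert, Finset.mem_singleton] at ht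
    rcases ht with rfl | rfl | rfl | rfl
    exacts [⟨c1, hc1⟩, ⟨c2, hc2⟩, h5, h6]
  -- at least three coordinates of x i₀ are units mod p
  have hcard : 2 < (Finset.univ.filter fun w : Fin 4 => ¬ (p:ℤ) ∣ x i₀ w).card := by
    by_contra hc
    push_neg at hc
    have htot := Finset.card_filter_add_card_filter_not
      (s := (Finset.univ : Finset (Fin 4))) (p := fun w : Fin 4 => ¬ (p:ℤ) ∣ x i₀ w)
    have hcc : 1 < (Finset.univ.filter fun w : Fin 4 => ¬¬ (p:ℤ) ∣ x i₀ w).card := by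
      simp only [Finset.card_univ, Fintype.card_fin] at htot
      omega
    obtain ⟨w1, hw1, w2, hw2, hne⟩ := Finset.one_lt_card.mp hcc
    have hd1 := (Finset.mem_filter.mp hw1).2
    have hd2 := (Finset.mem_filter.mp hw2).2
    push_neg at hd1 hd2
    exact hbad w1 w2 hne hd1 hd2
  obtain ⟨m, j1, j2, hm, hj1, hj2, hmj1, hmj2, hj12⟩ := Finset.two_lt_card_iff.mp hcard
  have hm' : ¬ (p:ℤ) ∣ x i₀ m := (Finset.mem_filter.mp hm).2
  have hj1' : ¬ (p:ℤ) ∣ x i₀ j1 := (Finset.mem_filter.mp hj1).2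
  have hj2' : ¬ (p:ℤ) ∣ x i₀ j2 := (Finset.mem_filter.mp hj2).2
  obtain ⟨c, hcm, hcj1, hcj2⟩ := fin4_choice m j1 j2 hmj1 hmj2 hj12
  have huniv := fin4_cover m j1 j2 c hmj1 hmj2 hj12 hcm hcj1 hcj2
  have hsum : ∀ (f : Fin 4 → ℤ), ∑ t, f t = f c + f m + f j1 + f j2 :=
    fun f => sum4 hcm hcj1 hcj2 hmj1 hmj2 hj12 huniv f
  -- coordinates m, j1, j2 are units mod p for every point
  have hcoordnz : ∀ i, ∀ w : Fin 4, ¬ (p:ℤ) ∣ x i₀ w → ¬ (p:ℤ) ∣ x i w := by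
    intro i w h0 hdvd
    obtain ⟨u, hu⟩ := hred i₀ i
    have h1 : ((x i w : ℤ) : ZMod p) = 0 := (ZMod.intCast_zmod_eq_zero_iff_dvd _ _).mpr hdvd
    rw [hu w] at h1
    have h2 : ((x i₀ w : ℤ) : ZMod p) = 0 := (Units.mul_right_eq_zero u).mp h1
    exact h0 ((ZMod.intCast_zmod_eq_zero_iff_dvd _ _).mp h2)
  -- normalisation scalars
  set N := s * (s - 1) / 2 with hNdef
  have hlam : ∀ i, ∃ lam : ℤ, (p:ℤ)^N ∣ lam * x i m - 1 := by
    intro i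
    have hcop : IsCoprime ((p:ℤ)^N) (x i m) :=
      ((hpI.coprime_iff_not_dvd).mpr (hcoordnz i m hm')).pow_left
    obtain ⟨c0, d0, h⟩ := hcop
    exact ⟨d0, ⟨-c0, by linarith⟩⟩
  choose lam hlamh using hlam
  set y : Fin s → Fin 4 → ℤ := fun i w => lam i * x i w with hy
  have hy' : ∀ i w, y i w = lam i * x i w := fun i w => rfl
  have hpdvdpN : (p:ℤ) ∣ (p:ℤ)^N := dvd_pow_self _ (by omega : N ≠ 0)
  have hlamnd : ∀ i, ¬ (p:ℤ) ∣ lam i := by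
    intro i hdvd
    apply hp1
    have h1 : (p:ℤ) ∣ lam i * x i m := hdvd.mul_right _
    have h2 : (p:ℤ) ∣ lam i * x i m - 1 := hpdvdpN.trans (hlamh i)
    have := h1.sub h2
    simpa using this
  -- coordinatewise congruence of the normalised points
  have hycong : ∀ i, ∀ w, (p:ℤ) ∣ y i w - y i₀ w := by
    intro i w
    have hgoal : ((y i w - y i₀ w : ℤ) : ZMod p) = 0 := by
      rw [hy' i w, hy' i₀ w]
      push_cast
      rw [sub_eq_zero]
      obtain ⟨u, hu⟩ := hred i₀ i
      have hcast1 : ∀ i', ((lam i' : ℤ) : ZMod p) * ((x i' m : ℤ) : ZMod p) = 1 := by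
        intro i'
        have h2 : (p:ℤ) ∣ lam i' * x i' m - 1 := hpdvdpN.trans (hlamh i')
        have h3 : ((lam i' * x i' m - 1 : ℤ) : ZMod p) = 0 :=
          (ZMod.intCast_zmod_eq_zero_iff_dvd _ _).mpr h2
        push_cast at h3
        linear_combination h3
      have hx0 : ((x i₀ m : ℤ) : ZMod p) ≠ 0 := by
        intro h
        exact hm' ((ZMod.intCast_zmod_eq_zero_iff_dvd _ _).mp h)
      have key : ((lam i : ℤ) : ZMod p) * (u : ZMod p) = ((lam i₀ : ℤ) : ZMod p) := by
        apply mul_right_cancel₀ hx0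
        have e1 := hcast1 i
        rw [hu m] at e1
        rw [hcast1 i₀]
        linear_combination e1
      show ((lam i : ℤ) : ZMod p) * ((x i w : ℤ) : ZMod p) =
        ((lam i₀ : ℤ) : ZMod p) * ((x i₀ w : ℤ) : ZMod p)
      rw [hu w, ← key]
      ring
    have := (ZMod.intCast_zmod_eq_zero_iff_dvd _ _).mp hgoal
    exact this
  -- the quadrics at the normalised points
  have hyq : ∀ i, a j1 * (y i j1)^2 + a j2 * (y i j2)^2 + a c * (y i c)^2 + a m * (y i m)^2 = 0 := by
    intro i
    have h0 := hxq i
    rw [hsum (fun t => a t * x i t ^ 2)] at h0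
    simp only [hy']
    linear_combination (lam i)^2 * h0
  have hyr : ∀ i, b j1 * (y i j1)^2 + b j2 * (y i j2)^2 + b c * (y i c)^2 + b m * (y i m)^2 = 0 := by
    intro i
    have h0 := hxr i
    rw [hsum (fun t => b t * x i t ^ 2)] at h0
    simp only [hy']
    linear_combination (lam i)^2 * h0
  have hym1 : ∀ i, (p:ℤ)^N ∣ y i m - 1 := fun i => hlamh i
  have hym2 : ∀ i, (p:ℤ)^N ∣ (y i m)^2 - 1 := by
    intro i
    have e : (y i m)^2 - 1 = (y i m - 1) * (y i m + 1) := by ring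
    rw [e]
    exact (hym1 i).mul_right _
  -- nondegeneracy of the Jacobian
  have hΔ : ¬ (p:ℤ) ∣ 4 * y i₀ j1 * y i₀ j2 * (a j1 * b j2 - a j2 * b j1) := by
    intro hdvd
    have h4 : ¬ (p:ℤ) ∣ 4 := by
      intro h
      rw [show (4:ℤ) = 2^2 by norm_num] at h
      have h2 : (p:ℤ) ∣ 2 := hpI.dvd_of_dvd_pow h
      have h2' : p ∣ 2 := by exact_mod_cast h2
      exact hodd ((Nat.prime_dvd_prime_iff_eq hp Nat.prime_two).mp h2')
    have hyj1 : ¬ (p:ℤ) ∣ y i₀ j1 := by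
      intro h
      rcases hpI.dvd_mul.mp h with h | h
      · exact hlamnd i₀ h
      · exact hj1' h
    have hyj2 : ¬ (p:ℤ) ∣ y i₀ j2 := by
      intro h
      rcases hpI.dvd_mul.mp h with h | h
      · exact hlamnd i₀ h
      · exact hj2' h
    rcases hpI.dvd_mul.mp hdvd with h | h
    · rcases hpI.dvd_mul.mp h with h | h
      · rcases hpI.dvd_mul.mp h with h | h
        · exact h4 h
        · exact hyj1 h
      · exact hyj2 h
    · exact hgood' j1 j2 hj12 h
  obtain ⟨U, V, hUV⟩ := hensel_curve p hp N (a j1) (a j2) (a c) (a m)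
    (b j1) (b j2) (b c) (b m)
    (fun i => y i j1) (fun i => y i j2) (fun i => y i c) (fun i => y i m)
    (y i₀ j1) (y i₀ j2) hyq hyr hym2
    (fun i => hycong i j1) (fun i => hycong i j2) hΔ
  -- the parametrising polynomials for each coordinate
  set P : Fin 4 → Polynomial ℤ := fun w =>
    if w = m then 1 else if w = j1 then U else if w = j2 then V else Polynomial.X with hPdef
  have hP : ∀ i w, (p:ℤ)^N ∣ y i w - (P w).eval (y i c) := by
    intro i w
    have hw4 : w = c ∨ w = m ∨ w = j1 ∨ w = j2 := by
      have : w ∈ ({c, m, j1, j2} : Finset (Fin 4)) := huniv ▸ Finset.mem_univ w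
      simpa [Finset.mem_insert] using this
    rcases hw4 with rfl | rfl | rfl | rfl
    · simp only [hPdef, if_neg hcm, if_neg hcj1, if_neg hcj2, Polynomial.eval_X,
        sub_self]
      exact dvd_zero _
    · simp only [hPdef, if_pos rfl, Polynomial.eval_one]
      exact hym1 i
    · simp only [hPdef, if_neg (Ne.symm hmj1), if_pos rfl]
      exact (hUV i).1
    · simp only [hPdef, if_neg (Ne.symm hmj2), if_neg (Ne.symm hj12), if_pos rfl]
      exact (hUV i).2
  set Q : Fin s → Polynomial ℤ := fun j => (d j).prod fun w e => (P w)^e with hQdef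
  -- entrywise congruence mod p^N
  have hentry : ∀ i j, ((((d j).prod fun w e => (y i w)^e : ℤ)) : ZMod (p^N)) =
      (((Q j).eval (y i c) : ℤ) : ZMod (p^N)) := by
    intro i j
    have hcast : ∀ w : Fin 4, ((y i w : ℤ) : ZMod (p^N)) =
        (((P w).eval (y i c) : ℤ) : ZMod (p^N)) := by
      intro w
      have h2 : ((y i w - (P w).eval (y i c) : ℤ) : ZMod (p^N)) = 0 := by
        rw [ZMod.intCast_zmod_eq_zero_iff_dvd]
        push_cast
        exact hP i w
      rw [Int.cast_sub, sub_eq_zero] at h2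
      exact h2
    simp only [hQdef, Finsupp.prod, Polynomial.eval_prod, Polynomial.eval_pow]
    push_cast
    exact Finset.prod_congr rfl fun w _ => by rw [hcast w]
  -- divisibility for the normalised matrix
  have hdetY : (p:ℤ)^N ∣ Matrix.det (Matrix.of fun i j => (d j).prod fun w e => (y i w)^e) := by
    have hQdvd : (p:ℤ)^N ∣ Matrix.det (Matrix.of fun i j => (Q j).eval (y i c)) :=
      det_dvd_param p s Q (fun i => y i c) (y i₀ c) (fun i => hycong i c)
    have hdiffcast : ((Matrix.det (Matrix.of fun i j => (d j).prod fun w e => (y i w)^e) -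
        Matrix.det (Matrix.of fun i j => (Q j).eval (y i c)) : ℤ) : ZMod (p^N)) = 0 := by
      rw [Int.cast_sub, sub_eq_zero]
      have e1 := RingHom.map_det (Int.castRingHom (ZMod (p^N)))
        (Matrix.of fun i j => (d j).prod fun w e => (y i w)^e)
      have e2 := RingHom.map_det (Int.castRingHom (ZMod (p^N)))
        (Matrix.of fun i j => (Q j).eval (y i c))
      show (Int.castRingHom (ZMod (p^N)))
          (Matrix.det (Matrix.of fun i j => (d j).prod fun w e => (y i w)^e)) =
        (Int.castRingHom (ZMod (p^N)))
          (Matrix.det (Matrix.of fun i j => (Q j).eval (y i c)))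
      rw [e1, e2]
      congr 1
      ext i j
      simpa using hentry i j
    have hdiff : (p:ℤ)^N ∣ Matrix.det (Matrix.of fun i j => (d j).prod fun w e => (y i w)^e) -
        Matrix.det (Matrix.of fun i j => (Q j).eval (y i c)) := by
      have := (ZMod.intCast_zmod_eq_zero_iff_dvd _ _).mp hdiffcast
      push_cast at this
      exact this
    have := dvd_add hdiff hQdvd
    simpa using this
  -- relate to the original matrix
  have hrel : ∀ i j, (d j).prod (fun w e => (y i w)^e) =
      (lam i)^D * ((d j).prod fun w e => (x i w)^e) := by
    intro i j
    simp only [hy', Finsupp.prod]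
    rw [← hdeg j, Finsupp.sum, ← Finset.prod_pow_eq_pow_sum, ← Finset.prod_mul_distrib]
    exact Finset.prod_congr rfl fun w _ => by rw [mul_pow]
  have hdetrel : Matrix.det (Matrix.of fun i j => (d j).prod fun w e => (y i w)^e) =
      (∏ i, (lam i)^D) * Matrix.det (Matrix.of fun i j => (d j).prod fun w e => (x i w)^e) := by
    rw [← Matrix.det_mul_column (fun i => (lam i)^D)]
    congr 1
    ext i j
    simp only [Matrix.of_apply]
    exact hrel i j
  rw [hdetrel] at hdetY
  have hcop : IsCoprime ((p:ℤ)^N) (∏ i, (lam i)^D) :=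
    IsCoprime.prod_right fun i _ =>
      (((hpI.coprime_iff_not_dvd).mpr (hlamnd i)).pow_left).pow_right
  exact hcop.dvd_of_dvd_mul_left hdetY
end
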